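/- arXiv:1710.10097 — 3 statements merged into one kernel-verified Lean document; each statement's English description precedes it below -/
import Mathlib

section
/- Let T be a tree on n vertices whose edges are assigned s×s real positive definite matrix weights, let D be its distance matrix, and let Q be the incidence matrix of T built from the inverse square roots of the weights. Then Q^T · D · Q = −2 I_{(n−1)s}. -/
open Matrix
open scoped MatrixOrder

section TreeAux

variable {V : Type*} [DecidableEq V] {G : SimpleGraph V}

private lemma tree_path_eq (hT : G.IsTree) {x t : V} {p q : G.Walk x t}
    (hp : p.IsPath) (hq : q.IsPath) : p = q :=
  (hT.existsUnique_path x t).unique hp hq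

private lemma tree_step (hT : G.IsTree) {x y t : V} (h : G.Adj x y)
    (p : G.Walk x t) (q : G.Walk y t) (hp : p.IsPath) (hq : q.IsPath) :
    p = SimpleGraph.Walk.cons h q ∨ q = SimpleGraph.Walk.cons h.symm p := by
  by_cases hx : x ∈ q.support
  · right
    have h1 : q.takeUntil x hx = SimpleGraph.Walk.cons h.symm SimpleGraph.Walk.nil :=
      tree_path_eq hT (hq.takeUntil hx)
        (by simp [SimpleGraph.Walk.cons_isPath_iff, h.ne'])
    have h2 : q.dropUntil x hx = p := tree_path_eq hT (hq.dropUntil hx) hp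
    have h3 := q.take_spec hx
    rw [h1, h2] at h3
    rw [SimpleGraph.Walk.cons_append, SimpleGraph.Walk.nil_append] at h3
    exact h3.symm
  · left
    exact tree_path_eq hT hp (hq.cons hx)

private lemma tree_contra (hT : G.IsTree) {x y u v : V} (h : G.Adj x y) (h' : G.Adj u v)
    (hne : s(x, y) ≠ s(u, v)) {pyu : G.Walk y u} {pxv : G.Walk x v}
    (hpyu : pyu.IsPath) (hpxv : pxv.IsPath)
    (h1 : (SimpleGraph.Walk.cons h pyu).IsPath)
    (h2 : (SimpleGraph.Walk.cons h.symm pxv).IsPath) : False := by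
  have hxp : x ∉ pyu.support := ((SimpleGraph.Walk.cons_isPath_iff h pyu).1 h1).2
  by_cases hv : v ∈ pyu.support
  · -- the initial segment of pyu up to v is the path from y to v, which contains x
    have e1 : pyu.takeUntil v hv = SimpleGraph.Walk.cons h.symm pxv :=
      tree_path_eq hT (hpyu.takeUntil hv) h2
    have hx1 : x ∈ (pyu.takeUntil v hv).support := by
      rw [e1, SimpleGraph.Walk.support_cons]
      exact List.mem_cons_of_mem _ pxv.start_mem_support
    exact hxp (pyu.support_takeUntil_subset hv hx1)
  · -- appending the edge (u,v) to pyu gives the path from y to v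
    have hconcat : (pyu.concat h').IsPath := by
      have hc : (SimpleGraph.Walk.cons h'.symm pyu.reverse).IsPath :=
        hpyu.reverse.cons (by rwa [SimpleGraph.Walk.support_reverse, List.mem_reverse])
      have hc2 := hc.reverse
      rwa [SimpleGraph.Walk.reverse_cons, SimpleGraph.Walk.reverse_reverse] at hc2
    have e1 : SimpleGraph.Walk.cons h.symm pxv = pyu.concat h' :=
      tree_path_eq hT h2 hconcat
    have hx1 : x ∈ (pyu.concat h').support := by
      rw [← e1, SimpleGraph.Walk.support_cons]
      exact List.mem_cons_of_mem _ pxv.start_mem_support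
    rw [SimpleGraph.Walk.support_concat, List.mem_append] at hx1
    rcases hx1 with hx1 | hx1
    · exact hxp hx1
    · -- x = v
      have hxv : x = v := by simpa using hx1
      subst hxv
      have hnil : pxv = SimpleGraph.Walk.nil :=
        (SimpleGraph.Walk.isPath_iff_eq_nil (p := pxv)).1 hpxv
      rw [hnil] at e1
      have hlen := congrArg SimpleGraph.Walk.length e1
      rw [SimpleGraph.Walk.length_concat] at hlen
      simp only [SimpleGraph.Walk.length_cons, SimpleGraph.Walk.length_nil] at hlen
      have hyu : y = u := SimpleGraph.Walk.eq_of_length_eq_zero (p := pyu) (by omega)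
      subst hyu
      exact hne (by rw [Sym2.eq_swap])

private lemma tree_four_point {M : Type*} [AddCommMonoid M] (hT : G.IsTree)
    (w : Sym2 V → M) (dist : V → V → M)
    (hdist : ∀ (i j : V) (p : G.Walk i j), p.IsPath → dist i j = (p.edges.map w).sum)
    {x y u v : V} (h : G.Adj x y) (h' : G.Adj u v) (hne : s(x, y) ≠ s(u, v)) :
    dist x u + dist y v = dist y u + dist x v := by
  obtain ⟨pxu, hpxu, -⟩ := hT.existsUnique_path x u
  obtain ⟨pyu, hpyu, -⟩ := hT.existsUnique_path y u
  obtain ⟨pxv, hpxv, -⟩ := hT.existsUnique_path x v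
  obtain ⟨pyv, hpyv, -⟩ := hT.existsUnique_path y v
  rcases tree_step hT h pxu pyu hpxu hpyu with e1 | e1 <;>
    rcases tree_step hT h pxv pyv hpxv hpyv with e2 | e2
  · -- pxu = cons h pyu, pxv = cons h pyv
    have d1 : dist x u = w s(x, y) + dist y u := by
      rw [hdist x u pxu hpxu, hdist y u pyu hpyu, e1, SimpleGraph.Walk.edges_cons,
        List.map_cons, List.sum_cons]
    have d2 : dist x v = w s(x, y) + dist y v := by
      rw [hdist x v pxv hpxv, hdist y v pyv hpyv, e2, SimpleGraph.Walk.edges_cons,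
        List.map_cons, List.sum_cons]
    rw [d1, d2]
    abel
  · -- pxu = cons h pyu, pyv = cons h.symm pxv : contradiction
    exact absurd (tree_contra hT h h' hne hpyu hpxv (e1 ▸ hpxu) (e2 ▸ hpyv)) not_false
  · -- pyu = cons h.symm pxu, pxv = cons h pyv : contradiction (swap x and y)
    have hne' : s(y, x) ≠ s(u, v) := by rwa [Sym2.eq_swap]
    exact absurd (tree_contra hT h.symm h' hne' hpxu hpyv (e1 ▸ hpyu) (e2 ▸ hpxv)) not_false
  · -- pyu = cons h.symm pxu, pyv = cons h.symm pxv
    have d1 : dist y u = w s(x, y) + dist x u := by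
      rw [hdist y u pyu hpyu, hdist x u pxu hpxu, e1, SimpleGraph.Walk.edges_cons,
        List.map_cons, List.sum_cons, Sym2.eq_swap]
    have d2 : dist y v = w s(x, y) + dist x v := by
      rw [hdist y v pyv hpyv, hdist x v pxv hpxv, e2, SimpleGraph.Walk.edges_cons,
        List.map_cons, List.sum_cons, Sym2.eq_swap]
    rw [d1, d2]
    abel

end TreeAux

/-- Let `T` be a tree on `n` vertices whose edges `e₁, …, e_{n-1}` are assigned
`s × s` real positive definite matrix weights, let `D` be its distance matrix, and let `Q` be
the incidence matrix of `T` built from the inverses of the positive definite square roots of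
the weights (with respect to a chosen orientation `o` enumerating the edges).  Then
`Qᵀ · D · Q = -2 I_{(n-1)s}`. -/
theorem transpose_incidence_mul_dist_mul_incidence {n s : ℕ}
    (G : SimpleGraph (Fin n)) [DecidableRel G.Adj] (hT : G.IsTree)
    (o : Fin (n - 1) → Fin n × Fin n)
    (ho_adj : ∀ j, G.Adj (o j).1 (o j).2)
    (ho_inj : Function.Injective fun j => Sym2.mk (o j).1 (o j).2)
    (ho_surj : ∀ e ∈ G.edgeSet, ∃ j, Sym2.mk (o j).1 (o j).2 = e)
    (W : Fin (n - 1) → Matrix (Fin s) (Fin s) ℝ)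
    (hW : ∀ j, (W j).PosDef)
    (w : Sym2 (Fin n) → Matrix (Fin s) (Fin s) ℝ)
    (hwW : ∀ j, w (Sym2.mk (o j).1 (o j).2) = W j)
    (D : Matrix (Fin n × Fin s) (Fin n × Fin s) ℝ)
    (hD : ∀ (i j : Fin n) (p : G.Walk i j), p.IsPath →
      ∀ a b, D (i, a) (j, b) = ((p.edges.map w).sum) a b)
    (Q : Matrix (Fin n × Fin s) (Fin (n - 1) × Fin s) ℝ)
    (hQ : ∀ p q, Q p q =
      if p.1 = (o q.1).1 then ((CFC.sqrt (W q.1))⁻¹) p.2 q.2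
      else if p.1 = (o q.1).2 then -(((CFC.sqrt (W q.1))⁻¹) p.2 q.2)
      else 0) :
    Qᵀ * D * Q = (-2 : ℝ) • (1 : Matrix (Fin (n - 1) × Fin s) (Fin (n - 1) × Fin s) ℝ) := by
  classical
  set S : Fin (n - 1) → Matrix (Fin s) (Fin s) ℝ :=
    fun j => (CFC.sqrt (W j))⁻¹ with hSdef
  -- basic facts about S
  have hid : ∀ j, (S j)ᵀ * (W j * S j) = 1 := by
    intro j
    obtain ⟨R, hRR, hRsym, hSR⟩ :
        ∃ R : Matrix (Fin s) (Fin s) ℝ, R * R = W j ∧ Rᵀ = R ∧ S j = R⁻¹ := by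
      refine ⟨CFC.sqrt (W j), CFC.sqrt_mul_sqrt_self _ (hW j).posSemidef.nonneg, ?_, rfl⟩
      have h := IsSelfAdjoint.of_nonneg (CFC.sqrt_nonneg (W j))
      rwa [IsSelfAdjoint, Matrix.star_eq_conjTranspose,
        Matrix.conjTranspose_eq_transpose_of_trivial] at h
    have hdet : IsUnit R.det := by
      have h1 : R.det * R.det = (W j).det := by rw [← Matrix.det_mul, hRR]
      have h2 : (W j).det ≠ 0 := ne_of_gt (hW j).det_pos
      exact isUnit_iff_ne_zero.2 fun h0 => h2 (by rw [← h1, h0, zero_mul])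
    rw [hSR, Matrix.transpose_nonsing_inv, hRsym, ← hRR, Matrix.mul_assoc,
      Matrix.mul_nonsing_inv _ hdet, Matrix.mul_one, Matrix.nonsing_inv_mul _ hdet]
  -- distance blocks
  set dist : Fin n → Fin n → Matrix (Fin s) (Fin s) ℝ :=
    fun i j => Matrix.of fun a b => D (i, a) (j, b) with hdistdef
  have hdist : ∀ (i j : Fin n) (p : G.Walk i j), p.IsPath →
      dist i j = (p.edges.map w).sum := by
    intro i j p hp
    ext a b
    exact hD i j p hp a b
  have hdiag : ∀ i, dist i i = 0 := by
    intro i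
    have := hdist i i SimpleGraph.Walk.nil (SimpleGraph.Walk.IsPath.nil)
    simpa using this
  have hadj : ∀ {u v : Fin n}, G.Adj u v → dist u v = w s(u, v) := by
    intro u v h
    have hp : (SimpleGraph.Walk.cons h SimpleGraph.Walk.nil).IsPath := by
      simp [SimpleGraph.Walk.cons_isPath_iff, h.ne]
    have := hdist u v _ hp
    simpa using this
  have hfour : ∀ {x y u v : Fin n}, G.Adj x y → G.Adj u v → s(x, y) ≠ s(u, v) →
      dist x u + dist y v = dist y u + dist x v :=
    fun h h' hne => tree_four_point hT w dist hdist h h' hne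
  -- the column computation: D * Q
  have hDQ : ∀ (x : Fin n) (α : Fin s) (k : Fin (n - 1)) (b : Fin s),
      (D * Q) (x, α) (k, b) = ((dist x (o k).1 - dist x (o k).2) * S k) α b := by
    intro x α k b
    rw [Matrix.mul_apply, Fintype.sum_prod_type]
    have hterm : ∀ q1 : Fin n,
        (∑ q2 : Fin s, D (x, α) (q1, q2) * Q (q1, q2) (k, b))
          = (if q1 = (o k).1 then (dist x (o k).1 * S k) α b else 0)
            + (if q1 = (o k).2 then -((dist x (o k).2 * S k) α b) else 0) := by
      intro q1
      by_cases h1 : q1 = (o k).1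
      · subst h1
        rw [if_pos rfl, if_neg (ho_adj k).ne, add_zero, Matrix.mul_apply]
        refine Finset.sum_congr rfl fun q2 _ => ?_
        rw [hQ ((o k).1, q2) (k, b), if_pos rfl]
        rfl
      · by_cases h2 : q1 = (o k).2
        · subst h2
          rw [if_neg h1, if_pos rfl, zero_add, Matrix.mul_apply, ← Finset.sum_neg_distrib]
          refine Finset.sum_congr rfl fun q2 _ => ?_
          rw [hQ ((o k).2, q2) (k, b), if_neg h1, if_pos rfl, mul_neg]
          rfl
        · rw [if_neg h1, if_neg h2, add_zero]
          refine Finset.sum_eq_zero fun q2 _ => ?_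
          rw [hQ (q1, q2) (k, b), if_neg h1, if_neg h2, mul_zero]
    rw [Finset.sum_congr rfl fun q1 _ => hterm q1, Finset.sum_add_distrib,
      Finset.sum_ite_eq', Finset.sum_ite_eq']
    simp [Matrix.sub_mul, Matrix.sub_apply, sub_eq_add_neg, Matrix.add_mul,
      Matrix.add_apply, Matrix.neg_mul, Matrix.neg_apply]
  -- main entrywise computation
  rw [Matrix.mul_assoc]
  ext ⟨j, a⟩ ⟨k, b⟩
  have key : (Qᵀ * (D * Q)) (j, a) (k, b)
      = ((S j)ᵀ * ((dist (o j).1 (o k).1 - dist (o j).1 (o k).2) * S k)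
          - (S j)ᵀ * ((dist (o j).2 (o k).1 - dist (o j).2 (o k).2) * S k)) a b := by
    rw [Matrix.mul_apply, Fintype.sum_prod_type]
    have hterm : ∀ p1 : Fin n,
        (∑ p2 : Fin s, Qᵀ (j, a) (p1, p2) * (D * Q) (p1, p2) (k, b))
          = (if p1 = (o j).1 then
               ((S j)ᵀ * ((dist (o j).1 (o k).1 - dist (o j).1 (o k).2) * S k)) a b else 0)
            + (if p1 = (o j).2 then
               -(((S j)ᵀ * ((dist (o j).2 (o k).1 - dist (o j).2 (o k).2) * S k)) a b) else 0) := by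
      intro p1
      by_cases h1 : p1 = (o j).1
      · subst h1
        rw [if_pos rfl, if_neg (ho_adj j).ne, add_zero, Matrix.mul_apply]
        refine Finset.sum_congr rfl fun p2 _ => ?_
        rw [Matrix.transpose_apply, Matrix.transpose_apply, hQ ((o j).1, p2) (j, a),
          if_pos rfl, hDQ]
      · by_cases h2 : p1 = (o j).2
        · subst h2
          rw [if_neg h1, if_pos rfl, zero_add, Matrix.mul_apply, ← Finset.sum_neg_distrib]
          refine Finset.sum_congr rfl fun p2 _ => ?_
          rw [Matrix.transpose_apply, Matrix.transpose_apply, hQ ((o j).2, p2) (j, a),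
            if_neg h1, if_pos rfl, hDQ, neg_mul]
        · rw [if_neg h1, if_neg h2, add_zero]
          refine Finset.sum_eq_zero fun p2 _ => ?_
          rw [Matrix.transpose_apply, hQ (p1, p2) (j, a), if_neg h1, if_neg h2, zero_mul]
    rw [Finset.sum_congr rfl fun p1 _ => hterm p1, Finset.sum_add_distrib,
      Finset.sum_ite_eq', Finset.sum_ite_eq']
    simp [Matrix.sub_apply, sub_eq_add_neg]
  rw [key]
  by_cases hjk : j = k
  · subst hjk
    have e1 : dist (o j).1 (o j).1 = 0 := hdiag _
    have e2 : dist (o j).2 (o j).2 = 0 := hdiag _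
    have e3 : dist (o j).1 (o j).2 = W j := by
      rw [hadj (ho_adj j)]
      exact hwW j
    have e4 : dist (o j).2 (o j).1 = W j := by
      rw [hadj (ho_adj j).symm, Sym2.eq_swap]
      exact hwW j
    rw [e1, e2, e3, e4, zero_sub, sub_zero, Matrix.neg_mul, Matrix.mul_neg, hid j]
    simp only [Matrix.sub_apply, Matrix.neg_apply, Matrix.one_apply, Matrix.smul_apply,
      Prod.mk.injEq, true_and, smul_eq_mul]
    by_cases hab : a = b <;> simp [hab] <;> norm_num
  · have heq : dist (o j).1 (o k).1 - dist (o j).1 (o k).2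
        = dist (o j).2 (o k).1 - dist (o j).2 (o k).2 := by
      have hne : s((o j).1, (o j).2) ≠ s((o k).1, (o k).2) := by
        intro hcon
        exact hjk (ho_inj (by simpa using hcon))
      have h4 := hfour (ho_adj j) (ho_adj k) hne
      rw [sub_eq_sub_iff_add_eq_add]
      exact h4
    rw [heq, sub_self]
    have : ((j, a) : Fin (n-1) × Fin s) ≠ (k, b) := by
      simp [Prod.ext_iff, hjk]
    simp [Matrix.one_apply_ne this]
end

section
/- Let T be a tree on n vertices whose edges are assigned s×s real positive definite matrix weights, let D be its distance matrix, and let L be its Laplacian matrix formed from the inverses of the weights. If H is any generalized inverse of L (i.e., L H L = L), written in n×n block form with s×s blocks H_{i,j}, then for all vertices i, j: H_{i,i} + H_{j,j} − H_{i,j} − H_{j,i} = D_{i,j}, where D_{i,j} is the (i,j) block of D. -/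
set_option linter.unusedSectionVars false
set_option linter.unusedVariables false
set_option maxHeartbeats 1000000


open Matrix

/-- Matrix-weighted Laplacian: each edge weight is replaced by its inverse. -/
noncomputable def matLap {n s : ℕ} (G : SimpleGraph (Fin n)) [DecidableRel G.Adj]
    (w : Sym2 (Fin n) → Matrix (Fin s) (Fin s) ℝ) :
    Matrix (Fin n × Fin s) (Fin n × Fin s) ℝ :=
  Matrix.of fun p q =>
    if p.1 = q.1 then (∑ k ∈ G.neighborFinset p.1, (w s(p.1, k))⁻¹) p.2 q.2
    else if G.Adj p.1 q.1 then (-(w s(p.1, q.1))⁻¹) p.2 q.2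
    else 0

section Aux

variable {n s : ℕ} (G : SimpleGraph (Fin n)) [DecidableRel G.Adj]
  (w : Sym2 (Fin n) → Matrix (Fin s) (Fin s) ℝ)

open scoped Classical in
noncomputable def ypot (u v : Fin n) (a : Fin s) : Fin n × Fin s → ℝ :=
  fun q => if (G.deleteEdges {s(u, v)}).Reachable q.1 u
    then w (s(u, v)) q.2 a else 0

def xdiff (u v : Fin n) (a : Fin s) : Fin n × Fin s → ℝ :=
  Pi.single (u, a) 1 - Pi.single (v, a) 1

lemma winv_mul (hw : ∀ e ∈ G.edgeSet, (w e).PosDef) {e : Sym2 (Fin n)} (he : e ∈ G.edgeSet) :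
    (w e)⁻¹ * w e = 1 :=
  Matrix.nonsing_inv_mul _ (isUnit_iff_ne_zero.mpr (ne_of_gt (hw e he).det_pos))

lemma wsymm (hw : ∀ e ∈ G.edgeSet, (w e).PosDef) {e : Sym2 (Fin n)} (he : e ∈ G.edgeSet)
    (c d : Fin s) : w e c d = w e d c := by
  have h := (hw e he).1
  conv_lhs => rw [← h]
  simp [Matrix.conjTranspose_apply]

lemma winv_symm (hw : ∀ e ∈ G.edgeSet, (w e).PosDef) {e : Sym2 (Fin n)} (he : e ∈ G.edgeSet)
    (c d : Fin s) : (w e)⁻¹ c d = (w e)⁻¹ d c := by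
  have h := (hw e he).1.inv
  conv_lhs => rw [← h]
  simp [Matrix.conjTranspose_apply]

lemma Lsymm (hw : ∀ e ∈ G.edgeSet, (w e).PosDef) (p q : Fin n × Fin s) :
    matLap G w p q = matLap G w q p := by
  obtain ⟨p1, p2⟩ := p
  obtain ⟨q1, q2⟩ := q
  simp only [matLap, Matrix.of_apply]
  by_cases h : p1 = q1
  · subst h
    simp only [if_pos rfl]
    rw [Matrix.sum_apply, Matrix.sum_apply]
    refine Finset.sum_congr rfl fun k hk => ?_
    exact winv_symm G w hw ((G.mem_edgeSet.mpr ((G.mem_neighborFinset _ _).mp hk))) p2 q2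
  · have h' : ¬ q1 = p1 := fun hh => h hh.symm
    simp only [if_neg h, if_neg h']
    by_cases ha : G.Adj p1 q1
    · rw [if_pos ha, if_pos ha.symm]
      have hsw : s(q1, p1) = s(p1, q1) := Sym2.eq_swap
      rw [hsw]
      simp only [Matrix.neg_apply, neg_inj]
      exact winv_symm G w hw (G.mem_edgeSet.mpr ha) p2 q2
    · rw [if_neg ha, if_neg (fun hh => ha hh.symm)]

lemma mulVec_ypot (hT : G.IsTree) (hw : ∀ e ∈ G.edgeSet, (w e).PosDef)
    {u v : Fin n} (huv : G.Adj u v) (a : Fin s) :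
    (matLap G w).mulVec (ypot G w u v a) = xdiff u v a := by
  classical
  have hbr : ¬ (G.deleteEdges {s(u, v)}).Reachable u v := by
    have := (SimpleGraph.isAcyclic_iff_forall_edge_isBridge.mp hT.2) (G.mem_edgeSet.mpr huv)
    exact SimpleGraph.isBridge_iff.mp this
  have hne : u ≠ v := huv.ne
  funext pc
  obtain ⟨p, c⟩ := pc
  set W := w (s(u, v)) with hW
  set χ : Fin n → ℝ := fun q =>
    if (G.deleteEdges {s(u, v)}).Reachable q u then 1 else 0 with hχ
  have hy : ∀ q d, ypot G w u v a (q, d) = χ q * W d a := by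
    intro q d
    simp only [ypot, hχ]
    by_cases h : (G.deleteEdges {s(u, v)}).Reachable q u <;> simp [h, hW]
  -- χ is constant across surviving edges
  have hχ_adj : ∀ {x y : Fin n}, G.Adj x y → s(x, y) ≠ s(u, v) → χ x = χ y := by
    intro x y hxy hne'
    have hadj : (G.deleteEdges {s(u, v)}).Adj x y := by
      rw [SimpleGraph.deleteEdges_adj]
      exact ⟨hxy, by simpa using hne'⟩
    have : (G.deleteEdges {s(u, v)}).Reachable x u
        ↔ (G.deleteEdges {s(u, v)}).Reachable y u := by
      constructor
      · exact fun h => (hadj.symm.reachable).trans h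
      · exact fun h => (hadj.reachable).trans h
    simp only [hχ]
    by_cases h : (G.deleteEdges {s(u, v)}).Reachable x u
    · rw [if_pos h, if_pos (this.mp h)]
    · rw [if_neg h, if_neg (fun hh => h (this.mpr hh))]
  have hχu : χ u = 1 := if_pos (SimpleGraph.Reachable.refl u)
  have hχv : χ v = 0 := if_neg (fun h => hbr (h.symm))
  -- main sum computation
  have step1 : (matLap G w).mulVec (ypot G w u v a) (p, c)
      = ∑ k ∈ G.neighborFinset p, (χ p - χ k) * ((w (s(p, k)))⁻¹ * W) c a := by
    show (∑ qd : Fin n × Fin s, matLap G w (p, c) qd * ypot G w u v a qd) = _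
    rw [Fintype.sum_prod_type]
    have hsplit : ∀ q : Fin n, (∑ d : Fin s, matLap G w (p, c) (q, d) * ypot G w u v a (q, d))
        = (if q = p then ∑ k ∈ G.neighborFinset p, χ p * ((w (s(p, k)))⁻¹ * W) c a
           else 0)
          + (if G.Adj p q then -(χ q * ((w (s(p, q)))⁻¹ * W) c a) else 0) := by
      intro q
      by_cases hq : q = p
      · subst hq
        rw [if_pos rfl, if_neg (G.irrefl), add_zero]
        have hm : ∀ d : Fin s, matLap G w (q, c) (q, d)
            = ∑ k ∈ G.neighborFinset q, (w (s(q, k)))⁻¹ c d := by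
          intro d
          simp [matLap, Matrix.sum_apply]
        calc (∑ d : Fin s, matLap G w (q, c) (q, d) * ypot G w u v a (q, d))
            = ∑ d : Fin s, ∑ k ∈ G.neighborFinset q,
                (w (s(q, k)))⁻¹ c d * (χ q * W d a) := by
              refine Finset.sum_congr rfl fun d _ => ?_
              rw [hm d, hy, Finset.sum_mul]
          _ = ∑ k ∈ G.neighborFinset q, ∑ d : Fin s,
                (w (s(q, k)))⁻¹ c d * (χ q * W d a) := Finset.sum_comm
          _ = ∑ k ∈ G.neighborFinset q, χ q * ((w (s(q, k)))⁻¹ * W) c a := by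
              refine Finset.sum_congr rfl fun k _ => ?_
              rw [Matrix.mul_apply, Finset.mul_sum]
              exact Finset.sum_congr rfl fun d _ => by ring
      · rw [if_neg hq, zero_add]
        have hm : ∀ d : Fin s, matLap G w (p, c) (q, d)
            = if G.Adj p q then -((w (s(p, q)))⁻¹ c d) else 0 := by
          intro d
          simp only [matLap, Matrix.of_apply]
          rw [if_neg (fun h => hq h.symm)]
          by_cases ha : G.Adj p q
          · rw [if_pos ha, if_pos ha]; rfl
          · rw [if_neg ha, if_neg ha]
        by_cases ha : G.Adj p q
        · rw [if_pos ha]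
          calc (∑ d : Fin s, matLap G w (p, c) (q, d) * ypot G w u v a (q, d))
              = ∑ d : Fin s, -(χ q * ((w (s(p, q)))⁻¹ c d * W d a)) := by
                refine Finset.sum_congr rfl fun d _ => ?_
                rw [hm d, if_pos ha, hy]; ring
            _ = -(χ q * ((w (s(p, q)))⁻¹ * W) c a) := by
                rw [Finset.sum_neg_distrib, Matrix.mul_apply, Finset.mul_sum]
        · rw [if_neg ha]
          refine Finset.sum_eq_zero fun d _ => ?_
          rw [hm d, if_neg ha, zero_mul]
    calc (∑ q : Fin n, ∑ d : Fin s, matLap G w (p, c) (q, d) * ypot G w u v a (q, d))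
        = ∑ q : Fin n,
            ((if q = p then ∑ k ∈ G.neighborFinset p, χ p * ((w (s(p, k)))⁻¹ * W) c a
              else 0)
             + (if G.Adj p q then -(χ q * ((w (s(p, q)))⁻¹ * W) c a) else 0)) :=
          Finset.sum_congr rfl fun q _ => hsplit q
      _ = (∑ k ∈ G.neighborFinset p, χ p * ((w (s(p, k)))⁻¹ * W) c a)
          + ∑ q ∈ G.neighborFinset p, -(χ q * ((w (s(p, q)))⁻¹ * W) c a) := by
          rw [Finset.sum_add_distrib]
          congr 1
          · rw [Finset.sum_ite_eq' Finset.univ p]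
            simp
          · rw [SimpleGraph.neighborFinset_eq_filter, Finset.sum_filter]
      _ = ∑ k ∈ G.neighborFinset p, (χ p - χ k) * ((w (s(p, k)))⁻¹ * W) c a := by
          rw [← Finset.sum_add_distrib]
          exact Finset.sum_congr rfl fun k _ => by ring
  rw [step1]
  have hxd : xdiff u v a (p, c)
      = (if (p, c) = (u, a) then (1:ℝ) else 0) - (if (p, c) = (v, a) then 1 else 0) := by
    simp [xdiff, Pi.single_apply]
  by_cases hpu : p = u
  · subst hpu
    rw [Finset.sum_eq_single_of_mem v ((G.mem_neighborFinset _ _).mpr huv)]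
    · rw [hχu, hχv, hW, winv_mul G w hw (G.mem_edgeSet.mpr huv), hxd]
      simp [Matrix.one_apply, Prod.ext_iff, hne]
    · intro k hk hkv
      have hne2 : s(p, k) ≠ s(p, v) := by
        intro h
        rcases Sym2.eq_iff.mp h with ⟨_, h2⟩ | ⟨h1, _⟩
        · exact hkv h2
        · exact hne h1
      rw [hχ_adj ((G.mem_neighborFinset _ _).mp hk) hne2]
      ring
  · by_cases hpv : p = v
    · subst hpv
      rw [Finset.sum_eq_single_of_mem u ((G.mem_neighborFinset _ _).mpr huv.symm)]
      · have hsw : s(p, u) = s(u, p) := Sym2.eq_swap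
        rw [hχu, hχv, hsw, hW, winv_mul G w hw (G.mem_edgeSet.mpr huv), hxd]
        have h1 : ¬ ((p, c) = (u, a)) := fun h => hpu (Prod.ext_iff.mp h).1
        rw [if_neg h1]
        simp only [Matrix.one_apply, Prod.mk.injEq, true_and, zero_sub]
        split <;> norm_num
      · intro k hk hku
        have hne2 : s(p, k) ≠ s(u, p) := by
          intro h
          rcases Sym2.eq_iff.mp h with ⟨h1, _⟩ | ⟨_, h2⟩
          · exact hne h1.symm
          · exact hku h2
        rw [hχ_adj ((G.mem_neighborFinset _ _).mp hk) hne2]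
        ring
    · have h0 : (∑ k ∈ G.neighborFinset p, (χ p - χ k) * ((w (s(p, k)))⁻¹ * W) c a)
          = 0 := by
        refine Finset.sum_eq_zero fun k hk => ?_
        have hne2 : s(p, k) ≠ s(u, v) := by
          intro h
          rcases Sym2.eq_iff.mp h with ⟨h1, _⟩ | ⟨h1, _⟩
          · exact hpu h1
          · exact hpv h1
        rw [hχ_adj ((G.mem_neighborFinset _ _).mp hk) hne2]
        ring
      have h1 : ¬ ((p, c) = (u, a)) := fun h => hpu (Prod.ext_iff.mp h).1
      have h2 : ¬ ((p, c) = (v, a)) := fun h => hpv (Prod.ext_iff.mp h).1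
      rw [h0, hxd, if_neg h1, if_neg h2, sub_zero]

end Aux

section More

variable {n s : ℕ} (G : SimpleGraph (Fin n)) [DecidableRel G.Adj]
  (w : Sym2 (Fin n) → Matrix (Fin s) (Fin s) ℝ)

noncomputable def Ysum : {i j : Fin n} → G.Walk i j → Fin s → (Fin n × Fin s → ℝ)
  | _, _, SimpleGraph.Walk.nil, _ => 0
  | _, _, @SimpleGraph.Walk.cons _ _ i v _ h q, a => ypot G w i v a + Ysum q a

lemma mulVec_Ysum (hT : G.IsTree) (hw : ∀ e ∈ G.edgeSet, (w e).PosDef)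
    {i j : Fin n} (p : G.Walk i j) (a : Fin s) :
    (matLap G w).mulVec (Ysum G w p a) = xdiff i j a := by
  induction p with
  | nil =>
    show (matLap G w).mulVec 0 = xdiff _ _ a
    rw [Matrix.mulVec_zero]
    funext z
    simp [xdiff]
  | @cons i v j h q ih =>
    show (matLap G w).mulVec (ypot G w i v a + Ysum G w q a) = xdiff i j a
    rw [Matrix.mulVec_add, mulVec_ypot G w hT hw h a, ih]
    funext z
    simp only [xdiff, Pi.add_apply, Pi.sub_apply]
    ring

lemma Ysum_apply {i j : Fin n} (p : G.Walk i j) (a : Fin s) (z : Fin n × Fin s) :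
    Ysum G w p a z = (p.darts.map (fun d => ypot G w d.fst d.snd a z)).sum := by
  induction p with
  | nil => simp [Ysum]
  | @cons i v j h q ih =>
    show (ypot G w i v a + Ysum G w q a) z = _
    rw [SimpleGraph.Walk.darts_cons, List.map_cons, List.sum_cons]
    simp only [Pi.add_apply, ih]

lemma darts_side (hT : G.IsTree) {i j : Fin n} (p : G.Walk i j) (hp : p.IsPath) :
    ∀ d ∈ p.darts, (G.deleteEdges {d.edge}).Reachable i d.fst ∧
      ¬ (G.deleteEdges {d.edge}).Reachable j d.fst := by
  induction p with
  | nil => simp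
  | @cons i v j h q ih =>
    intro d hd
    rw [SimpleGraph.Walk.darts_cons, List.mem_cons] at hd
    have hp' : q.IsPath := hp.of_cons
    have hniv : s(i, v) ∉ q.edges := by
      have hnd := hp.isTrail.edges_nodup
      rw [SimpleGraph.Walk.edges_cons] at hnd
      exact (List.nodup_cons.mp hnd).1
    rcases hd with rfl | hd
    · refine ⟨SimpleGraph.Reachable.refl i, ?_⟩
      intro hji
      have hbr : ¬ (G.deleteEdges {s(i, v)}).Reachable i v := by
        have := (SimpleGraph.isAcyclic_iff_forall_edge_isBridge.mp hT.2) (G.mem_edgeSet.mpr h)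
        exact SimpleGraph.isBridge_iff.mp this
      have hjv : (G.deleteEdges {s(i, v)}).Reachable j v :=
        ⟨q.reverse.toDeleteEdges {s(i, v)} (by
          intro e he hmem
          rw [SimpleGraph.Walk.edges_reverse, List.mem_reverse] at he
          rw [Set.mem_singleton_iff] at hmem
          exact hniv (hmem ▸ he))⟩
      exact hbr ((hji.symm).trans hjv)
    · have hde : d.edge ∈ q.edges := List.mem_map_of_mem hd
      have hne_e : s(i, v) ≠ d.edge := fun h' => hniv (h' ▸ hde)
      have hadj : (G.deleteEdges {d.edge}).Adj i v := by
        rw [SimpleGraph.deleteEdges_adj]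
        exact ⟨h, by simpa using hne_e⟩
      obtain ⟨h1, h2⟩ := ih hp' d hd
      exact ⟨hadj.reachable.trans h1, h2⟩

lemma list_sum_apply (l : List (Matrix (Fin s) (Fin s) ℝ)) (c d : Fin s) :
    l.sum c d = (l.map fun M => M c d).sum := by
  induction l with
  | nil => simp
  | cons M t ih => rw [List.sum_cons, List.map_cons, List.sum_cons, Matrix.add_apply, ih]

end More

section Eval

variable {n s : ℕ} (G : SimpleGraph (Fin n)) [DecidableRel G.Adj]
  (w : Sym2 (Fin n) → Matrix (Fin s) (Fin s) ℝ)

lemma Ysum_eval_start (hT : G.IsTree) {i j : Fin n} (p : G.Walk i j) (hp : p.IsPath)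
    (a b : Fin s) :
    Ysum G w p a (i, b) = (p.darts.map (fun d => w d.edge b a)).sum := by
  rw [Ysum_apply]
  congr 1
  refine List.map_congr_left fun d hd => ?_
  have hr := (darts_side G hT p hp d hd).1
  have hde : s(d.fst, d.snd) = d.edge := rfl
  simp only [ypot, hde]
  have hr' : (G.deleteEdges {s(d.toProd.1, d.toProd.2)}).Reachable i d.toProd.1 := hr
  rw [if_pos hr]

lemma Ysum_eval_end (hT : G.IsTree) {i j : Fin n} (p : G.Walk i j) (hp : p.IsPath)
    (a b : Fin s) :
    Ysum G w p a (j, b) = 0 := by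
  rw [Ysum_apply]
  refine List.sum_eq_zero fun x hx => ?_
  rw [List.mem_map] at hx
  obtain ⟨d, hd, rfl⟩ := hx
  have hr := (darts_side G hT p hp d hd).2
  have hde : s(d.fst, d.snd) = d.edge := rfl
  simp only [ypot, hde]
  have hr' : ¬ (G.deleteEdges {s(d.toProd.1, d.toProd.2)}).Reachable j d.toProd.1 := hr
  rw [if_neg hr]

end Eval

/-- Let `T` be a tree on `n` vertices with `s × s` real positive definite matrix
weights, `D` its distance matrix and `L` its Laplacian formed from the inverses of the weights.
If `H` is any g-inverse of `L`, written in block form with `s × s` blocks `H_{i,j}`, then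
`H_{i,i} + H_{j,j} - H_{i,j} - H_{j,i} = D_{i,j}` for all vertices `i, j`. -/
theorem ginverse_blocks_distance {n s : ℕ}
    (G : SimpleGraph (Fin n)) [DecidableRel G.Adj] (hT : G.IsTree)
    (w : Sym2 (Fin n) → Matrix (Fin s) (Fin s) ℝ)
    (hw : ∀ e ∈ G.edgeSet, (w e).PosDef)
    (D : Matrix (Fin n × Fin s) (Fin n × Fin s) ℝ)
    (hD : ∀ (i j : Fin n) (p : G.Walk i j), p.IsPath →
      ∀ a b, D (i, a) (j, b) = ((p.edges.map w).sum) a b)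
    (H : Matrix (Fin n × Fin s) (Fin n × Fin s) ℝ)
    (hH : matLap G w * H * matLap G w = matLap G w) :
    ∀ (i j : Fin n) (a b : Fin s),
      H (i, a) (i, b) + H (j, a) (j, b) - H (i, a) (j, b) - H (j, a) (i, b) = D (i, a) (j, b) := by
  intro i j a b
  obtain ⟨p0⟩ := hT.1.preconnected i j
  set P := p0.toPath with hP
  have hp : P.1.IsPath := P.2
  set p : G.Walk i j := P.1
  have hLT : (matLap G w)ᵀ = matLap G w := by
    ext x y
    exact Lsymm G w hw y x
  -- step A: dot product equals combination of entries of H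
  have keyA : xdiff i j a ⬝ᵥ ((H * matLap G w) *ᵥ Ysum G w p b)
      = H (i, a) (i, b) + H (j, a) (j, b) - H (i, a) (j, b) - H (j, a) (i, b) := by
    rw [← Matrix.mulVec_mulVec, mulVec_Ysum G w hT hw p b]
    simp only [xdiff, sub_dotProduct, single_dotProduct, Matrix.mulVec_sub,
      Pi.sub_apply]
    rw [Matrix.mulVec_single, Matrix.mulVec_single]
    simp only [Pi.smul_apply, Matrix.col_apply, MulOpposite.op_one, one_smul]
    ring
  -- step B: move L across
  have keyB : xdiff i j a ⬝ᵥ ((H * matLap G w) *ᵥ Ysum G w p b)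
      = Ysum G w p a ⬝ᵥ xdiff i j b := by
    conv_lhs => rw [← mulVec_Ysum G w hT hw p a]
    have h1 : matLap G w *ᵥ Ysum G w p a = Ysum G w p a ᵥ* matLap G w := by
      conv_lhs => rw [← hLT]
      rw [Matrix.mulVec_transpose]
    rw [h1, ← Matrix.dotProduct_mulVec, Matrix.mulVec_mulVec, ← Matrix.mul_assoc, hH,
      mulVec_Ysum G w hT hw p b]
  have keyC : Ysum G w p a ⬝ᵥ xdiff i j b = (p.darts.map (fun d => w d.edge b a)).sum := by
    simp only [xdiff, dotProduct_sub, dotProduct_single, mul_one]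
    rw [Ysum_eval_start G w hT p hp a b, Ysum_eval_end G w hT p hp a b, sub_zero]
  have keyD : D (i, a) (j, b) = (p.darts.map (fun d => w d.edge b a)).sum := by
    rw [hD i j p hp a b, list_sum_apply]
    have he : p.edges = p.darts.map SimpleGraph.Dart.edge := rfl
    rw [he, List.map_map, List.map_map]
    refine congrArg List.sum ?_
    refine List.map_congr_left fun d hd => ?_
    show w d.edge a b = w d.edge b a
    exact wsymm G w hw (p.edges_subset_edgeSet
      (by rw [he]; exact List.mem_map_of_mem hd)) a b
  rw [← keyA, keyB, keyC, keyD]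
end

section
/- Let T be a tree on n vertices whose edges are assigned s×s real positive definite matrix weights, let D be its distance matrix and L its Laplacian matrix formed from the inverses of the weights. Let μ_1 ≥ μ_2 ≥ … ≥ μ_s > 0 > μ_{s+1} ≥ … ≥ μ_{ns} be the eigenvalues of D and λ_1 ≥ λ_2 ≥ … ≥ λ_{ns−s} > λ_{ns−s+1} = … = λ_{ns} = 0 the eigenvalues of L. Then μ_{s+i} ≤ −2/λ_i ≤ μ_i for i = 1, 2, …, ns−s. -/
open Matrix

set_option linter.unusedSectionVars false
set_option maxHeartbeats 1000000

lemma sum_dotProduct' {ι κ : Type*} [Fintype ι] (s : Finset κ) (f : κ → ι → ℝ) (y : ι → ℝ) :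
    (∑ k ∈ s, f k) ⬝ᵥ y = ∑ k ∈ s, f k ⬝ᵥ y := by
  simp only [dotProduct, Finset.sum_apply, Finset.sum_mul]
  exact Finset.sum_comm

lemma dotProduct_sum' {ι κ : Type*} [Fintype ι] (s : Finset κ) (y : ι → ℝ) (f : κ → ι → ℝ) :
    y ⬝ᵥ (∑ k ∈ s, f k) = ∑ k ∈ s, y ⬝ᵥ f k := by
  simp only [dotProduct, Finset.sum_apply, Finset.mul_sum]
  exact Finset.sum_comm

lemma mulVec_sum' {ι κ : Type*} [Fintype ι] (s : Finset κ) (A : Matrix ι ι ℝ) (f : κ → ι → ℝ) :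
    A *ᵥ (∑ k ∈ s, f k) = ∑ k ∈ s, A *ᵥ f k := by
  ext i
  simp only [mulVec, dotProduct, Finset.sum_apply, Finset.mul_sum]
  exact Finset.sum_comm

lemma quad_eval {ι κ : Type*} [Fintype ι] [Fintype κ] [DecidableEq κ]
    (A : Matrix ι ι ℝ) (v : κ → ι → ℝ) (θ : κ → ℝ)
    (hv : ∀ k l, v k ⬝ᵥ (A *ᵥ v l) = if k = l then θ k else 0)
    (c : κ → ℝ) :
    (∑ k, c k • v k) ⬝ᵥ (A *ᵥ (∑ k, c k • v k)) = ∑ k, c k ^ 2 * θ k := by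
  rw [mulVec_sum', sum_dotProduct']
  have : ∀ k, (c k • v k) ⬝ᵥ (∑ l, A *ᵥ (c l • v l)) = c k ^ 2 * θ k := by
    intro k
    rw [dotProduct_sum']
    have h2 : ∀ l, (c k • v k) ⬝ᵥ (A *ᵥ (c l • v l)) =
        c k * c l * (if k = l then θ k else 0) := by
      intro l
      rw [Matrix.mulVec_smul, smul_dotProduct, dotProduct_smul, hv]
      simp only [smul_eq_mul]; ring
    rw [Finset.sum_congr rfl fun l _ => h2 l]
    rw [Finset.sum_congr rfl (fun l _ => by rw [mul_ite, mul_zero])]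
    rw [Finset.sum_ite_eq Finset.univ k (fun l => c k * c l * θ k)]
    simp only [Finset.mem_univ, if_true]
    ring
  exact Finset.sum_congr rfl fun k _ => this k

lemma dot_self_eval {ι κ : Type*} [Fintype ι] [DecidableEq ι] [Fintype κ] [DecidableEq κ]
    (v : κ → ι → ℝ) (ho : ∀ k l, v k ⬝ᵥ v l = if k = l then 1 else 0) (c : κ → ℝ) :
    (∑ k, c k • v k) ⬝ᵥ (∑ k, c k • v k) = ∑ k, c k ^ 2 := by
  have := quad_eval (1 : Matrix ι ι ℝ) v (fun _ => 1)
    (fun k l => by rw [Matrix.one_mulVec]; simpa using ho k l) c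
  rw [Matrix.one_mulVec] at this
  simpa using this

lemma ortho_li {ι κ : Type*} [Fintype ι] [Fintype κ] [DecidableEq κ]
    (v : κ → ι → ℝ) (ho : ∀ k l, v k ⬝ᵥ v l = if k = l then 1 else 0) :
    LinearIndependent ℝ v := by
  rw [Fintype.linearIndependent_iff]
  intro c hc l
  have h0 : (∑ k, c k • v k) ⬝ᵥ v l = 0 := by rw [hc]; simp [zero_dotProduct]
  rw [sum_dotProduct'] at h0
  have : ∀ k, (c k • v k) ⬝ᵥ v l = if k = l then c k else 0 := by
    intro k
    rw [smul_dotProduct, ho]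
    by_cases h : k = l <;> simp [h]
  rw [Finset.sum_congr rfl fun k _ => this k, Finset.sum_ite_eq' Finset.univ l c] at h0
  simpa using h0

lemma interlace_core {ι : Type*} [Fintype ι] [DecidableEq ι] (A : Matrix ι ι ℝ)
    {N₁ N₂ : ℕ} (hcard : Fintype.card ι < N₁ + N₂)
    (v₁ : Fin N₁ → ι → ℝ) (v₂ : Fin N₂ → ι → ℝ)
    (θ₁ : Fin N₁ → ℝ) (θ₂ : Fin N₂ → ℝ) (r₁ r₂ : ℝ)
    (hv₁ : ∀ k l, v₁ k ⬝ᵥ (A *ᵥ v₁ l) = if k = l then θ₁ k else 0)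
    (ho₁ : ∀ k l, v₁ k ⬝ᵥ v₁ l = if k = l then 1 else 0)
    (hv₂ : ∀ k l, v₂ k ⬝ᵥ (A *ᵥ v₂ l) = if k = l then θ₂ k else 0)
    (ho₂ : ∀ k l, v₂ k ⬝ᵥ v₂ l = if k = l then 1 else 0)
    (hθ₁ : ∀ k, r₁ ≤ θ₁ k) (hθ₂ : ∀ k, θ₂ k ≤ r₂) : r₁ ≤ r₂ := by
  classical
  set S := Submodule.span ℝ (Set.range v₁) with hS
  set T := Submodule.span ℝ (Set.range v₂) with hT
  have hfS : Module.finrank ℝ S = N₁ := by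
    rw [hS, finrank_span_eq_card (ortho_li v₁ ho₁)]; simp
  have hfT : Module.finrank ℝ T = N₂ := by
    rw [hT, finrank_span_eq_card (ortho_li v₂ ho₂)]; simp
  have hdim : Module.finrank ℝ (ι → ℝ) = Fintype.card ι := by
    simp [Module.finrank_pi]
  have hsum := Submodule.finrank_sup_add_finrank_inf_eq S T
  have hsup : Module.finrank ℝ ↥(S ⊔ T) ≤ Fintype.card ι := by
    rw [← hdim]; exact Submodule.finrank_le _
  have hinf : 0 < Module.finrank ℝ ↥(S ⊓ T) := by omega
  have hne : S ⊓ T ≠ ⊥ := by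
    intro h
    rw [h, finrank_bot] at hinf
    exact lt_irrefl 0 hinf
  obtain ⟨x, hx, hx0⟩ := Submodule.exists_mem_ne_zero_of_ne_bot hne
  obtain ⟨hxS, hxT⟩ := Submodule.mem_inf.1 hx
  obtain ⟨c, hc⟩ := (Submodule.mem_span_range_iff_exists_fun ℝ).1 hxS
  obtain ⟨d, hd⟩ := (Submodule.mem_span_range_iff_exists_fun ℝ).1 hxT
  have hxx : x ⬝ᵥ x = ∑ k, c k ^ 2 := by rw [← hc]; exact dot_self_eval v₁ ho₁ c
  have hxx' : x ⬝ᵥ x = ∑ k, d k ^ 2 := by rw [← hd]; exact dot_self_eval v₂ ho₂ d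
  have hxxpos : 0 < x ⬝ᵥ x := by
    rcases Function.ne_iff.1 hx0 with ⟨i, hi⟩
    have : (0:ℝ) < ∑ j, x j * x j := by
      apply Finset.sum_pos' (fun j _ => mul_self_nonneg _)
      exact ⟨i, Finset.mem_univ i, mul_self_pos.mpr hi⟩
    simpa [dotProduct] using this
  have hQ1 : r₁ * (x ⬝ᵥ x) ≤ x ⬝ᵥ (A *ᵥ x) := by
    rw [← hc, quad_eval A v₁ θ₁ hv₁ c, hc, hxx, Finset.mul_sum]
    apply Finset.sum_le_sum
    intro k _
    rw [mul_comm]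
    exact mul_le_mul_of_nonneg_left (hθ₁ k) (sq_nonneg _)
  have hQ2 : x ⬝ᵥ (A *ᵥ x) ≤ r₂ * (x ⬝ᵥ x) := by
    rw [← hd, quad_eval A v₂ θ₂ hv₂ d, hd, hxx', Finset.mul_sum]
    apply Finset.sum_le_sum
    intro k _
    rw [mul_comm r₂]
    exact mul_le_mul_of_nonneg_left (hθ₂ k) (sq_nonneg _)
  have h := le_trans hQ1 hQ2
  rw [mul_comm r₁, mul_comm r₂] at h
  exact le_of_mul_le_mul_left h hxxpos

section graph
variable {n s : ℕ} (G : SimpleGraph (Fin n)) [DecidableRel G.Adj]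
  (w : Sym2 (Fin n) → Matrix (Fin s) (Fin s) ℝ)

lemma matLap_row_split (i k : Fin n) (a c : Fin s) :
    matLap G w (i, a) (k, c) =
      (if k = i then (∑ t ∈ G.neighborFinset i, (w (s(i, t)))⁻¹) a c else 0)
      + (if G.Adj i k then -((w (s(i, k)))⁻¹ a c) else 0) := by
  simp only [matLap, Matrix.of_apply]
  rcases eq_or_ne i k with h | h
  · subst h
    simp [G.irrefl]
  · rw [if_neg h, if_neg (Ne.symm h)]
    rcases em (G.Adj i k) with ha | ha <;> simp [ha, Matrix.neg_apply]

lemma matLap_col_split (k j : Fin n) (a b : Fin s) :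
    matLap G w (k, a) (j, b) =
      (if k = j then (∑ t ∈ G.neighborFinset j, (w (s(j, t)))⁻¹) a b else 0)
      + (if G.Adj j k then -((w (s(j, k)))⁻¹ a b) else 0) := by
  simp only [matLap, Matrix.of_apply]
  rcases eq_or_ne k j with h | h
  · subst h
    simp [G.irrefl]
  · rw [if_neg h, if_neg h, zero_add]
    rw [show (s(k, j)) = s(j, k) from Sym2.eq_swap]
    rcases em (G.Adj j k) with ha | ha
    · simp [ha, ha.symm, Matrix.neg_apply]
    · simp [ha, mt SimpleGraph.Adj.symm ha]

lemma matLap_colsum (j : Fin n) (a b : Fin s) :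
    ∑ k : Fin n, matLap G w (k, a) (j, b) = 0 := by
  rw [Finset.sum_congr rfl fun k _ => matLap_col_split G w k j a b]
  rw [Finset.sum_add_distrib]
  rw [Finset.sum_ite_eq' Finset.univ j
    (fun _ => (∑ t ∈ G.neighborFinset j, (w (s(j, t)))⁻¹) a b)]
  rw [Finset.sum_ite, Finset.sum_const_zero, add_zero]
  rw [show Finset.univ.filter (fun k => G.Adj j k) = G.neighborFinset j by
    ext t; simp [SimpleGraph.mem_neighborFinset]]
  simp [Matrix.sum_apply]
end graph

section dist
variable {n s : ℕ} {G : SimpleGraph (Fin n)} [DecidableRel G.Adj]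
  {w : Sym2 (Fin n) → Matrix (Fin s) (Fin s) ℝ}
  {D : Matrix (Fin n × Fin s) (Fin n × Fin s) ℝ}
  (hD : ∀ (i j : Fin n) (p : G.Walk i j), p.IsPath →
      ∀ a b, D (i, a) (j, b) = ((p.edges.map w).sum) a b)
include hD

lemma D_diag (i : Fin n) (a b : Fin s) : D (i, a) (i, b) = 0 := by
  simpa using hD i i SimpleGraph.Walk.nil SimpleGraph.Walk.IsPath.nil a b

lemma D_step {i k j : Fin n} (h : G.Adj i k) (p : G.Walk k j) (hp : p.IsPath)
    (hi : i ∉ p.support) (a b : Fin s) :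
    D (i, a) (j, b) = w (s(i, k)) a b + D (k, a) (j, b) := by
  have h1 := hD i j (SimpleGraph.Walk.cons h p)
    (by rw [SimpleGraph.Walk.cons_isPath_iff]; exact ⟨hp, hi⟩) a b
  have h2 := hD k j p hp a b
  rw [SimpleGraph.Walk.edges_cons, List.map_cons, List.sum_cons] at h1
  rw [h1, Matrix.add_apply, h2]

lemma D_adj {i k : Fin n} (h : G.Adj i k) (a b : Fin s) :
    D (k, a) (i, b) = w (s(i, k)) a b := by
  have h1 := D_step hD h.symm SimpleGraph.Walk.nil SimpleGraph.Walk.IsPath.nil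
    (by simp [h.ne']) a b
  rw [h1, D_diag hD, add_zero, show (s(k, i)) = s(i, k) from Sym2.eq_swap]

lemma D_dichotomy (hT : G.IsTree) {i j : Fin n} (hij : i ≠ j) :
    ∃ k : Fin n, G.Adj i k ∧
      (∀ a b, D (i, a) (j, b) = w (s(i, k)) a b + D (k, a) (j, b)) ∧
      (∀ t, G.Adj i t → t ≠ k →
        ∀ a b, D (t, a) (j, b) = w (s(i, t)) a b + D (i, a) (j, b)) := by
  obtain ⟨p, hp, -⟩ := hT.existsUnique_path i j
  cases p with
  | nil => exact absurd rfl hij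
  | @cons _ k _ h q =>
    have hp' := hp
    rw [SimpleGraph.Walk.cons_isPath_iff] at hp'
    obtain ⟨hq, hi⟩ := hp'
    refine ⟨k, h, fun a b => D_step hD h q hq hi a b, ?_⟩
    intro t hti htk a b
    have hts : t ∉ (SimpleGraph.Walk.cons h q).support := by
      intro hmem
      obtain ⟨r, -, hr⟩ := hT.existsUnique_path i t
      have e1 : (SimpleGraph.Walk.cons h q).takeUntil t hmem = r :=
        hr _ (hp.takeUntil hmem)
      have e2 : (SimpleGraph.Walk.cons hti SimpleGraph.Walk.nil) = r :=
        hr _ (by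
          show (SimpleGraph.Walk.cons hti SimpleGraph.Walk.nil).IsPath
          rw [SimpleGraph.Walk.cons_isPath_iff]
          exact ⟨SimpleGraph.Walk.IsPath.nil, by simp [hti.ne]⟩)
      have e4 := (SimpleGraph.Walk.cons h q).take_spec hmem
      rw [e1, ← e2, SimpleGraph.Walk.cons_append, SimpleGraph.Walk.nil_append] at e4
      have e5 := congrArg (fun z => z.getVert 1) e4
      simp only [SimpleGraph.Walk.getVert_cons_succ, SimpleGraph.Walk.getVert_zero] at e5
      exact htk e5
    have h1 := D_step hD hti.symm (SimpleGraph.Walk.cons h q) hp hts a b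
    rw [h1, show (s(t, i)) = s(i, t) from Sym2.eq_swap]

end dist

section main
variable {n s : ℕ} {G : SimpleGraph (Fin n)} [DecidableRel G.Adj]
  {w : Sym2 (Fin n) → Matrix (Fin s) (Fin s) ℝ}
  {D : Matrix (Fin n × Fin s) (Fin n × Fin s) ℝ}

lemma inv_mul_entry (hw : ∀ e ∈ G.edgeSet, (w e).PosDef) {i t : Fin n} (h : G.Adj i t)
    (a b : Fin s) :
    ∑ c, (w (s(i, t)))⁻¹ a c * (w (s(i, t))) c b
      = if a = b then 1 else 0 := by
  rw [← Matrix.mul_apply, Matrix.nonsing_inv_mul _ (isUnit_iff_ne_zero.mpr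
    ((hw _ (G.mem_edgeSet.mpr h)).det_pos).ne'), Matrix.one_apply]

lemma LD_apply (hT : G.IsTree) (hw : ∀ e ∈ G.edgeSet, (w e).PosDef)
    (hD : ∀ (i j : Fin n) (p : G.Walk i j), p.IsPath →
      ∀ a b, D (i, a) (j, b) = ((p.edges.map w).sum) a b)
    (i j : Fin n) (a b : Fin s) :
    (matLap G w * D) (i, a) (j, b) =
      ((2 - ((G.neighborFinset i).card : ℝ)) - if i = j then 2 else 0) *
        (if a = b then 1 else 0) := by
  have hfilter : Finset.univ.filter (fun k => G.Adj i k) = G.neighborFinset i := by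
    ext t; simp [SimpleGraph.mem_neighborFinset]
  have expand : (matLap G w * D) (i, a) (j, b)
      = ∑ t ∈ G.neighborFinset i,
          ∑ c, (w (s(i, t)))⁻¹ a c * (D (i, c) (j, b) - D (t, c) (j, b)) := by
    rw [Matrix.mul_apply, Fintype.sum_prod_type]
    have step1 : ∀ k, ∑ c, matLap G w (i, a) (k, c) * D (k, c) (j, b) =
        (if k = i then ∑ c, (∑ t ∈ G.neighborFinset i, (w (s(i, t)))⁻¹) a c
            * D (k, c) (j, b) else 0)
        + (if G.Adj i k then -∑ c, (w (s(i, k)))⁻¹ a c * D (k, c) (j, b) else 0) := by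
      intro k
      have : ∀ c, matLap G w (i, a) (k, c) * D (k, c) (j, b) =
          (if k = i then (∑ t ∈ G.neighborFinset i, (w (s(i, t)))⁻¹) a c
              * D (k, c) (j, b) else 0)
          + (if G.Adj i k then -((w (s(i, k)))⁻¹ a c * D (k, c) (j, b)) else 0) := by
        intro c
        rw [matLap_row_split, add_mul]
        congr 1
        · split <;> simp
        · split <;> simp
      rw [Finset.sum_congr rfl fun c _ => this c, Finset.sum_add_distrib]
      congr 1
      · split <;> simp
      · split <;> simp
    rw [Finset.sum_congr rfl fun k _ => step1 k, Finset.sum_add_distrib,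
      Finset.sum_ite_eq' Finset.univ i, Finset.sum_ite, Finset.sum_const_zero, add_zero,
      hfilter]
    simp only [Finset.mem_univ, if_true]
    have left : ∑ c, (∑ t ∈ G.neighborFinset i, (w (s(i, t)))⁻¹) a c * D (i, c) (j, b)
        = ∑ t ∈ G.neighborFinset i, ∑ c, (w (s(i, t)))⁻¹ a c * D (i, c) (j, b) := by
      rw [Finset.sum_comm]
      exact Finset.sum_congr rfl fun c _ => by rw [Matrix.sum_apply, Finset.sum_mul]
    rw [left, ← Finset.sum_add_distrib]
    refine Finset.sum_congr rfl fun t _ => ?_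
    rw [← Finset.sum_neg_distrib, ← Finset.sum_add_distrib]
    exact Finset.sum_congr rfl fun c _ => by ring
  rw [expand]
  rcases eq_or_ne i j with hij | hij
  · subst hij
    rw [if_pos rfl]
    have : ∀ t ∈ G.neighborFinset i,
        ∑ c, (w (s(i, t)))⁻¹ a c * (D (i, c) (i, b) - D (t, c) (i, b))
          = -(if a = b then 1 else 0) := by
      intro t ht
      have hadj := (G.mem_neighborFinset i t).mp ht
      rw [← inv_mul_entry hw hadj a b, ← Finset.sum_neg_distrib]
      refine Finset.sum_congr rfl fun c _ => ?_
      rw [D_diag hD, D_adj hD hadj]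
      ring
    rw [Finset.sum_congr rfl this, Finset.sum_const]
    push_cast
    ring
  · rw [if_neg hij]
    obtain ⟨k, hik, hk1, hk2⟩ := D_dichotomy hD hT hij
    have hkmem : k ∈ G.neighborFinset i := (G.mem_neighborFinset i k).mpr hik
    rw [← Finset.add_sum_erase _ _ hkmem]
    have hkterm : ∑ c, (w (s(i, k)))⁻¹ a c * (D (i, c) (j, b) - D (k, c) (j, b))
        = (if a = b then 1 else 0) := by
      rw [← inv_mul_entry hw hik a b]
      refine Finset.sum_congr rfl fun c _ => ?_
      rw [hk1 c b]
      ring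
    have hrest : ∀ t ∈ (G.neighborFinset i).erase k,
        ∑ c, (w (s(i, t)))⁻¹ a c * (D (i, c) (j, b) - D (t, c) (j, b))
          = -(if a = b then 1 else 0) := by
      intro t ht
      have htk := Finset.ne_of_mem_erase ht
      have hadj := (G.mem_neighborFinset i t).mp (Finset.mem_of_mem_erase ht)
      rw [← inv_mul_entry hw hadj a b, ← Finset.sum_neg_distrib]
      refine Finset.sum_congr rfl fun c _ => ?_
      rw [hk2 t hadj htk c b]
      ring
    rw [hkterm, Finset.sum_congr rfl hrest, Finset.sum_const,
      Finset.card_erase_of_mem hkmem]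
    have hcard : 1 ≤ (G.neighborFinset i).card := Finset.card_pos.mpr ⟨k, hkmem⟩
    have : (((G.neighborFinset i).card - 1 : ℕ) : ℝ)
        = ((G.neighborFinset i).card : ℝ) - 1 := by
      push_cast [hcard]
      ring
    rw [nsmul_eq_mul, this]
    ring

lemma LDL (hT : G.IsTree) (hw : ∀ e ∈ G.edgeSet, (w e).PosDef)
    (hD : ∀ (i j : Fin n) (p : G.Walk i j), p.IsPath →
      ∀ a b, D (i, a) (j, b) = ((p.edges.map w).sum) a b) :
    matLap G w * D * matLap G w = (-2 : ℝ) • matLap G w := by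
  ext ⟨i, a⟩ ⟨j, b⟩
  rw [Matrix.mul_apply, Fintype.sum_prod_type]
  have step : ∀ (k : Fin n) (c : Fin s),
      (matLap G w * D) (i, a) (k, c) * matLap G w (k, c) (j, b)
      = if a = c then ((2 - ((G.neighborFinset i).card : ℝ)) - if i = k then 2 else 0)
          * matLap G w (k, c) (j, b) else 0 := by
    intro k c
    rw [LD_apply hT hw hD]
    split <;> simp
  rw [Finset.sum_congr rfl fun k _ => (Finset.sum_congr rfl fun c _ => step k c)]
  rw [Finset.sum_congr rfl fun k _ => Finset.sum_ite_eq Finset.univ a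
    (fun c => ((2 - ((G.neighborFinset i).card : ℝ)) - if i = k then 2 else 0)
      * matLap G w (k, c) (j, b))]
  simp only [Finset.mem_univ, if_true]
  have split2 : ∀ k : Fin n,
      ((2 - ((G.neighborFinset i).card : ℝ)) - if i = k then 2 else 0)
        * matLap G w (k, a) (j, b)
      = (2 - ((G.neighborFinset i).card : ℝ)) * matLap G w (k, a) (j, b)
        - (if i = k then 2 * matLap G w (k, a) (j, b) else 0) := by
    intro k; split <;> ring
  rw [Finset.sum_congr rfl fun k _ => split2 k, Finset.sum_sub_distrib, ← Finset.mul_sum,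
    matLap_colsum, mul_zero, Finset.sum_ite_eq Finset.univ i
      (fun k => 2 * matLap G w (k, a) (j, b))]
  simp only [Finset.mem_univ, if_true, Matrix.smul_apply]
  simp only [smul_eq_mul]
  ring

end main


lemma dot_eq_inner {ι : Type*} [Fintype ι] (x y : EuclideanSpace ℝ ι) :
    (⇑x : ι → ℝ) ⬝ᵥ (⇑y : ι → ℝ) = inner ℝ x y := by
  simp [PiLp.inner_apply, dotProduct, RCLike.inner_apply, mul_comm]

/-- Let `T` be a tree on `n` vertices with `s × s` real positive definite matrix
weights, `D` its distance matrix and `L` its Laplacian formed from the inverses of the weights.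
Let `μ₁ ≥ ⋯ ≥ μ_s > 0 > μ_{s+1} ≥ ⋯ ≥ μ_{ns}` be the eigenvalues of `D` and
`λ₁ ≥ ⋯ ≥ λ_{ns-s} > λ_{ns-s+1} = ⋯ = λ_{ns} = 0` the eigenvalues of `L` (both listed in
nonincreasing order with multiplicity).  Then `μ_{s+i} ≤ -2/λᵢ ≤ μᵢ` for `i = 1, …, ns-s`.
(Here `μ` and `lam` are `0`-indexed, so `μᵢ` of the paper is `μ ⟨i-1, _⟩`.) -/
theorem distance_lap_eigenvalue_interlacing {n s : ℕ} (hn : 1 ≤ n)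
    (G : SimpleGraph (Fin n)) [DecidableRel G.Adj] (hT : G.IsTree)
    (w : Sym2 (Fin n) → Matrix (Fin s) (Fin s) ℝ)
    (hw : ∀ e ∈ G.edgeSet, (w e).PosDef)
    (D : Matrix (Fin n × Fin s) (Fin n × Fin s) ℝ)
    (hD : ∀ (i j : Fin n) (p : G.Walk i j), p.IsPath →
      ∀ a b, D (i, a) (j, b) = ((p.edges.map w).sum) a b)
    (hDh : D.IsHermitian) (hLh : (matLap G w).IsHermitian)
    (μ lam : Fin (n * s) → ℝ) (hμa : Antitone μ) (hlama : Antitone lam)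
    (hμ : ∃ σ : Fin (n * s) ≃ Fin n × Fin s, ∀ k, μ k = hDh.eigenvalues (σ k))
    (hlam : ∃ σ : Fin (n * s) ≃ Fin n × Fin s, ∀ k, lam k = hLh.eigenvalues (σ k))
    (hμpos : ∀ k : Fin (n * s), (k : ℕ) < s → 0 < μ k)
    (hμneg : ∀ k : Fin (n * s), s ≤ (k : ℕ) → μ k < 0)
    (hlampos : ∀ k : Fin (n * s), (k : ℕ) < n * s - s → 0 < lam k)
    (hlamzero : ∀ k : Fin (n * s), n * s - s ≤ (k : ℕ) → lam k = 0) :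
    ∀ i : ℕ, (hi : i < n * s - s) →
      μ ⟨s + i, by have h := Nat.le_mul_of_pos_left s hn; omega⟩ ≤
          -2 / lam ⟨i, by omega⟩ ∧
        -2 / lam ⟨i, by omega⟩ ≤ μ ⟨i, by omega⟩ := by
  intro i hi
  obtain ⟨σD, hσD⟩ := hμ
  obtain ⟨σL, hσL⟩ := hlam
  have hns : s < n * s := by omega
  have hcardι : Fintype.card (Fin n × Fin s) = n * s := by simp
  set L := matLap G w with hLdef
  set g : Fin (n * s) → (Fin n × Fin s) → ℝ :=
    fun k => ⇑(hDh.eigenvectorBasis (σD k)) with hgdef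
  set f : Fin (n * s) → (Fin n × Fin s) → ℝ :=
    fun k => ⇑(hLh.eigenvectorBasis (σL k)) with hfdef
  -- eigenvalue equations
  have hgD : ∀ k, D *ᵥ g k = μ k • g k := fun k => by
    rw [hσD]; exact hDh.mulVec_eigenvectorBasis (σD k)
  have hfL : ∀ k, L *ᵥ f k = lam k • f k := fun k => by
    rw [hσL]; exact hLh.mulVec_eigenvectorBasis (σL k)
  -- orthonormality as dot products
  have hgo : ∀ k l, g k ⬝ᵥ g l = if k = l then 1 else 0 := by
    intro k l
    rw [hgdef, dot_eq_inner,
      orthonormal_iff_ite.mp hDh.eigenvectorBasis.orthonormal (σD k) (σD l)]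
    by_cases h : k = l
    · simp [h]
    · simp [h, fun hh : σD k = σD l => h (σD.injective hh)]
  have hfo : ∀ k l, f k ⬝ᵥ f l = if k = l then 1 else 0 := by
    intro k l
    rw [hfdef, dot_eq_inner,
      orthonormal_iff_ite.mp hLh.eigenvectorBasis.orthonormal (σL k) (σL l)]
    by_cases h : k = l
    · simp [h]
    · simp [h, fun hh : σL k = σL l => h (σL.injective hh)]
  -- quadratic form of D on D-eigenvectors
  have hgq : ∀ k l, g k ⬝ᵥ (D *ᵥ g l) = if k = l then μ k else 0 := by
    intro k l
    rw [hgD l, dotProduct_smul, hgo]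
    by_cases h : k = l
    · simp [h]
    · simp [h]
  -- D is like -2/lam on L-eigenvectors
  have hsym : Lᵀ = L := by
    rw [← Matrix.conjTranspose_eq_transpose_of_trivial]; exact hLh
  have hLdot : ∀ x v : (Fin n × Fin s) → ℝ, x ⬝ᵥ (L *ᵥ v) = (L *ᵥ x) ⬝ᵥ v := by
    intro x v
    rw [Matrix.dotProduct_mulVec, ← Matrix.mulVec_transpose, hsym]
  have hLDL := LDL hT hw hD
  rw [← hLdef] at hLDL
  have key : ∀ k l, lam k * lam l * (f k ⬝ᵥ (D *ᵥ f l))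
      = -2 * (lam l * (f k ⬝ᵥ f l)) := by
    intro k l
    have e1 : f k ⬝ᵥ ((L * D * L) *ᵥ f l) = lam k * lam l * (f k ⬝ᵥ (D *ᵥ f l)) := by
      rw [← Matrix.mulVec_mulVec, hfL l, Matrix.mulVec_smul, ← Matrix.mulVec_mulVec,
        dotProduct_smul, hLdot, hfL k, smul_dotProduct]
      simp only [smul_eq_mul]
      ring
    have e2 : f k ⬝ᵥ ((L * D * L) *ᵥ f l) = -2 * (lam l * (f k ⬝ᵥ f l)) := by
      rw [hLDL, Matrix.smul_mulVec, hfL l, dotProduct_smul,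
        dotProduct_smul]
      simp only [smul_eq_mul]
    rw [← e1, e2]
  have hfq : ∀ k l : Fin (n * s), (k : ℕ) < n * s - s → (l : ℕ) < n * s - s →
      f k ⬝ᵥ (D *ᵥ f l) = if k = l then -2 / lam k else 0 := by
    intro k l hk hl
    have hkpos := hlampos k hk
    have hlpos := hlampos l hl
    have hkey := key k l
    rw [hfo] at hkey
    by_cases h : k = l
    · subst h
      rw [if_pos rfl]
      rw [if_pos rfl] at hkey
      field_simp
      nlinarith [hkey]
    · rw [if_neg h]
      rw [if_neg h] at hkey
      have : lam k * lam l ≠ 0 := by positivity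
      have h2 : lam k * lam l * (f k ⬝ᵥ (D *ᵥ f l)) = 0 := by rw [hkey]; ring
      exact (mul_eq_zero.mp h2).resolve_left this
  have hdiv : ∀ p q : Fin (n*s), (p:ℕ) < n*s - s → (q:ℕ) < n*s - s → p ≤ q →
      -2 / lam q ≤ -2 / lam p := by
    intro p q hp hq hpq
    have h1 := hlampos p hp
    have h2 := hlampos q hq
    have h3 : lam q ≤ lam p := hlama hpq
    rw [div_le_div_iff₀ h2 h1]
    nlinarith
  constructor
  · -- μ (s+i) ≤ -2 / lam i
    refine interlace_core D (N₁ := s + i + 1) (N₂ := n * s - s - i)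
      (by rw [hcardι]; omega)
      (fun t : Fin (s + i + 1) => g ⟨t.1, by omega⟩)
      (fun t : Fin (n * s - s - i) => f ⟨i + t.1, by omega⟩)
      (fun t => μ ⟨t.1, by omega⟩) (fun t => -2 / lam ⟨i + t.1, by omega⟩)
      _ _ ?_ ?_ ?_ ?_ ?_ ?_
    · intro k l
      rw [hgq]
      by_cases h : (k : ℕ) = (l : ℕ) <;> simp [Fin.ext_iff, h]
    · intro k l
      rw [hgo]
      by_cases h : (k : ℕ) = (l : ℕ) <;> simp [Fin.ext_iff, h]
    · intro k l
      rw [hfq _ _ (by simp; omega) (by simp; omega)]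
      by_cases h : (k : ℕ) = (l : ℕ) <;> simp [Fin.ext_iff, h]
    · intro k l
      rw [hfo]
      by_cases h : (k : ℕ) = (l : ℕ) <;> simp [Fin.ext_iff, h]
    · intro t
      exact hμa (by simp [Fin.mk_le_mk]; omega)
    · intro t
      exact hdiv ⟨i, by omega⟩ ⟨i + t.1, by omega⟩ (by simpa using hi)
        (by simp; omega) (by simp [Fin.mk_le_mk])
  · -- -2 / lam i ≤ μ i
    refine interlace_core D (N₁ := i + 1) (N₂ := n * s - i)
      (by rw [hcardι]; omega)
      (fun t : Fin (i + 1) => f ⟨t.1, by omega⟩)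
      (fun t : Fin (n * s - i) => g ⟨i + t.1, by omega⟩)
      (fun t => -2 / lam ⟨t.1, by omega⟩) (fun t => μ ⟨i + t.1, by omega⟩)
      _ _ ?_ ?_ ?_ ?_ ?_ ?_
    · intro k l
      rw [hfq _ _ (by simp; omega) (by simp; omega)]
      by_cases h : (k : ℕ) = (l : ℕ) <;> simp [Fin.ext_iff, h]
    · intro k l
      rw [hfo]
      by_cases h : (k : ℕ) = (l : ℕ) <;> simp [Fin.ext_iff, h]
    · intro k l
      rw [hgq]
      by_cases h : (k : ℕ) = (l : ℕ) <;> simp [Fin.ext_iff, h]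
    · intro k l
      rw [hgo]
      by_cases h : (k : ℕ) = (l : ℕ) <;> simp [Fin.ext_iff, h]
    · intro t
      exact hdiv ⟨t.1, by omega⟩ ⟨i, by omega⟩ (by simp; omega)
        (by simpa using hi) (by simp [Fin.mk_le_mk]; omega)
    · intro t
      exact hμa (by simp [Fin.mk_le_mk])
end
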